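/- For p ≥ 2, the constant c_p* := ((2/π^{p+1}) ∫_0^∞ |sin x/x|^p dx)^{1/p} · max_{0≤ω≤1} (sin(πω)/ω^{1−1/p}) satisfies lim_{p→∞} c_p* = 1. -/

import Mathlib

open Real MeasureTheory Filter Set

lemma fI_nonneg (p x : ℝ) : 0 ≤ |Real.sin x / x| ^ p := Real.rpow_nonneg (abs_nonneg _) p

lemma fI_meas {p : ℝ} (hp : 0 ≤ p) : Measurable (fun x => |Real.sin x / x| ^ p) :=
  (Real.continuous_rpow_const hp).measurable.comp
    (Real.measurable_sin.div measurable_id).abs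

lemma fI_integrable {p : ℝ} (hp : 2 ≤ p) :
    IntegrableOn (fun x => |Real.sin x / x| ^ p) (Set.Ioi (0:ℝ)) := by
  have hp0 : (0:ℝ) ≤ p := by linarith
  have h01 : IntegrableOn (fun x => |Real.sin x / x| ^ p) (Set.Ioc (0:ℝ) 1) := by
    apply Measure.integrableOn_of_bounded (M := 1)
    · exact measure_Ioc_lt_top.ne
    · exact (fI_meas hp0).aestronglyMeasurable
    · filter_upwards [ae_restrict_mem measurableSet_Ioc] with x hx
      rw [Real.norm_of_nonneg (fI_nonneg p x)]
      apply Real.rpow_le_one (abs_nonneg _) _ hp0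
      rw [abs_div, div_le_one (by rw [abs_of_pos hx.1]; exact hx.1), abs_of_pos hx.1]
      rw [abs_of_nonneg (Real.sin_nonneg_of_nonneg_of_le_pi hx.1.le
        (hx.2.trans (by linarith [Real.pi_gt_three])))]
      exact Real.sin_le hx.1.le
  have h1i : IntegrableOn (fun x => |Real.sin x / x| ^ p) (Set.Ioi (1:ℝ)) := by
    apply Integrable.mono (integrableOn_Ioi_rpow_of_lt (a := -p) (by linarith) one_pos)
    · exact (fI_meas hp0).aestronglyMeasurable
    · filter_upwards [ae_restrict_mem measurableSet_Ioi] with x hx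
      have hx1 : (1:ℝ) < x := hx
      rw [Real.norm_of_nonneg (fI_nonneg p x),
        Real.norm_of_nonneg (Real.rpow_nonneg (by linarith : (0:ℝ) ≤ x) _)]
      rw [Real.rpow_neg (by linarith : (0:ℝ) ≤ x), ← Real.inv_rpow (by linarith)]
      apply Real.rpow_le_rpow (abs_nonneg _) _ hp0
      rw [abs_div, div_le_iff₀ (by rw [abs_of_pos (by linarith)]; linarith)]
      rw [abs_of_pos (by linarith : (0:ℝ) < x), inv_mul_cancel₀ (by linarith)]
      exact Real.abs_sin_le_one x
  have : Set.Ioc (0:ℝ) 1 ∪ Set.Ioi 1 = Set.Ioi 0 := Set.Ioc_union_Ioi_eq_Ioi zero_le_one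
  rw [← this]
  exact h01.union h1i

lemma Ip_le_two {p : ℝ} (hp : 2 ≤ p) :
    (∫ x in Set.Ioi (0:ℝ), |Real.sin x / x| ^ p) ≤ 2 := by
  have hp0 : (0:ℝ) ≤ p := by linarith
  have hI := fI_integrable hp
  have hsplit : Set.Ioc (0:ℝ) 1 ∪ Set.Ioi 1 = Set.Ioi 0 := Set.Ioc_union_Ioi_eq_Ioi zero_le_one
  rw [← hsplit] at hI ⊢
  rw [setIntegral_union (Set.Ioc_disjoint_Ioi le_rfl) measurableSet_Ioi
    (hI.mono_set Set.subset_union_left) (hI.mono_set Set.subset_union_right)]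
  have h1 : (∫ x in Set.Ioc (0:ℝ) 1, |Real.sin x / x| ^ p) ≤ ∫ _x in Set.Ioc (0:ℝ) 1, (1:ℝ) := by
    apply setIntegral_mono_on (hI.mono_set Set.subset_union_left)
      (integrableOn_const measure_Ioc_lt_top.ne enorm_ne_top) measurableSet_Ioc
    intro x hx
    apply Real.rpow_le_one (abs_nonneg _) _ hp0
    rw [abs_div, div_le_one (by rw [abs_of_pos hx.1]; exact hx.1), abs_of_pos hx.1,
      abs_of_nonneg (Real.sin_nonneg_of_nonneg_of_le_pi hx.1.le
        (hx.2.trans (by linarith [Real.pi_gt_three])))]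
    exact Real.sin_le hx.1.le
  have h2 : (∫ x in Set.Ioi (1:ℝ), |Real.sin x / x| ^ p) ≤ ∫ x in Set.Ioi (1:ℝ), x ^ (-p) := by
    apply setIntegral_mono_on (hI.mono_set Set.subset_union_right)
      (integrableOn_Ioi_rpow_of_lt (by linarith) one_pos) measurableSet_Ioi
    intro x hx
    have hx1 : (1:ℝ) < x := hx
    rw [Real.rpow_neg (by linarith : (0:ℝ) ≤ x), ← Real.inv_rpow (by linarith)]
    apply Real.rpow_le_rpow (abs_nonneg _) _ hp0
    rw [abs_div, div_le_iff₀ (by rw [abs_of_pos (by linarith)]; linarith),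
      abs_of_pos (by linarith : (0:ℝ) < x), inv_mul_cancel₀ (by linarith)]
    exact Real.abs_sin_le_one x
  have h3 : (∫ x in Set.Ioi (1:ℝ), x ^ (-p)) = -1 / (-p + 1) := by
    rw [integral_Ioi_rpow_of_lt (by linarith) one_pos]
    norm_num
  have h4 : (∫ _x in Set.Ioc (0:ℝ) 1, (1:ℝ)) = 1 := by simp
  have h5 : -1 / (-p + 1) ≤ 1 := by
    rw [div_le_iff_of_neg (by linarith : -p + 1 < 0)]
    linarith
  nlinarith [h1, h2, h3, h4, h5]

lemma Ip_ge {p a : ℝ} (hp : 2 ≤ p) (ha0 : 0 < a) (ha1 : a ≤ 1) :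
    a * (1 - a^2/4) ^ p ≤ ∫ x in Set.Ioi (0:ℝ), |Real.sin x / x| ^ p := by
  have hp0 : (0:ℝ) ≤ p := by linarith
  have hI := fI_integrable hp
  have key : ∀ x ∈ Set.Ioc (0:ℝ) a, (1 - a^2/4) ^ p ≤ |Real.sin x / x| ^ p := by
    intro x hx
    apply Real.rpow_le_rpow (by nlinarith) _ hp0
    have hx1 : x ≤ 1 := hx.2.trans ha1
    have hsin := Real.sin_gt_sub_cube hx.1
    rw [abs_div, abs_of_pos hx.1, abs_of_nonneg (Real.sin_nonneg_of_nonneg_of_le_pi hx.1.le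
      (hx1.trans (by linarith [Real.pi_gt_three])))]
    rw [le_div_iff₀ hx.1]
    nlinarith [mul_nonneg (by nlinarith [hx.2, hx.1.le] : (0:ℝ) ≤ a^2 - x^2) hx.1.le, pow_pos hx.1 3]
  calc a * (1 - a^2/4) ^ p = ∫ _x in Set.Ioc (0:ℝ) a, (1 - a^2/4) ^ p := by
        rw [setIntegral_const, measureReal_def, Real.volume_Ioc, smul_eq_mul, sub_zero,
          ENNReal.toReal_ofReal ha0.le]
    _ ≤ ∫ x in Set.Ioc (0:ℝ) a, |Real.sin x / x| ^ p := by
        apply setIntegral_mono_on (integrableOn_const measure_Ioc_lt_top.ne enorm_ne_top)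
          (hI.mono_set Set.Ioc_subset_Ioi_self) measurableSet_Ioc key
    _ ≤ ∫ x in Set.Ioi (0:ℝ), |Real.sin x / x| ^ p := by
        apply setIntegral_mono_set hI
        · filter_upwards [ae_restrict_mem measurableSet_Ioi] with x _ using fI_nonneg p x
        · exact Filter.Eventually.of_forall Set.Ioc_subset_Ioi_self

lemma S_ub {p : ℝ} (hp : 2 ≤ p) :
    ∀ y ∈ (fun ω : ℝ => Real.sin (Real.pi * ω) / ω ^ (1 - 1/p)) '' Set.Icc 0 1,
      y ≤ Real.pi := by
  rintro y ⟨ω, hω, rfl⟩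
  have hp0 : (0:ℝ) < p := by linarith
  have hexp : (0:ℝ) < 1 - 1/p := by
    have : 1/p ≤ 1/2 := by
      rw [div_le_div_iff₀ hp0 two_pos]; linarith
    linarith
  rcases eq_or_lt_of_le hω.1 with h0 | h0
  · rw [← h0]
    simp [Real.zero_rpow (ne_of_gt hexp)]
    exact Real.pi_pos.le
  · have hωpow : (0:ℝ) < ω ^ (1 - 1/p) := Real.rpow_pos_of_pos h0 _
    rw [div_le_iff₀ hωpow]
    calc Real.sin (Real.pi * ω) ≤ Real.pi * ω :=
          Real.sin_le (by positivity)
      _ = Real.pi * (ω ^ (1/p) * ω ^ (1 - 1/p)) := by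
          rw [← Real.rpow_add h0]
          norm_num
      _ ≤ Real.pi * (1 * ω ^ (1 - 1/p)) := by
          apply mul_le_mul_of_nonneg_left _ Real.pi_pos.le
          apply mul_le_mul_of_nonneg_right _ hωpow.le
          exact Real.rpow_le_one hω.1 hω.2 (by positivity)
      _ = Real.pi * ω ^ (1 - 1/p) := by ring

lemma S_lb {p : ℝ} (hp : 2 ≤ p) :
    Real.sin (Real.pi * (1/p)) / (1/p) ^ (1 - 1/p) ≤
      sSup ((fun ω : ℝ => Real.sin (Real.pi * ω) / ω ^ (1 - 1/p)) '' Set.Icc 0 1) := by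
  apply le_csSup ⟨Real.pi, fun y hy => S_ub hp y hy⟩
  refine ⟨1/p, ⟨by positivity, ?_⟩, rfl⟩
  rw [div_le_one (by linarith)]; linarith

lemma tendsto_one_div : Filter.Tendsto (fun p : ℝ => 1/p) atTop (nhds 0) := by
  simpa [one_div] using (tendsto_inv_atTop_zero : Filter.Tendsto (fun r : ℝ => r⁻¹) atTop (nhds 0))

lemma tendsto_const_rpow_one_div {a : ℝ} (ha : 0 < a) :
    Filter.Tendsto (fun p : ℝ => a ^ (1/p)) atTop (nhds 1) := by
  have heq : ∀ p : ℝ, a ^ (1/p) = Real.exp (Real.log a * (1/p)) := fun p =>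
    Real.rpow_def_of_pos ha _
  simp_rw [heq]
  have h0 : Filter.Tendsto (fun p : ℝ => Real.log a * (1/p)) atTop (nhds (Real.log a * 0)) :=
    tendsto_one_div.const_mul _
  rw [mul_zero] at h0
  simpa [Function.comp_def] using (Real.continuous_exp.tendsto 0).comp h0

lemma tendsto_sin_div : Filter.Tendsto (fun x : ℝ => Real.sin x / x) (nhdsWithin 0 {0}ᶜ) (nhds 1) := by
  have h := hasDerivAt_iff_tendsto_slope.1 (Real.hasDerivAt_sin 0)
  rw [Real.cos_zero] at h
  refine h.congr fun x => ?_
  simp [slope]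
  rw [mul_comm, div_eq_mul_inv]

lemma tendsto_L : Filter.Tendsto
    (fun p : ℝ => Real.sin (Real.pi * (1/p)) / (1/p) ^ (1 - 1/p)) atTop (nhds Real.pi) := by
  have hπp : Filter.Tendsto (fun p : ℝ => Real.pi / p) atTop (nhdsWithin 0 {0}ᶜ) := by
    apply tendsto_nhdsWithin_of_tendsto_nhds_of_eventually_within
    · have := tendsto_one_div.const_mul Real.pi
      rw [mul_zero] at this
      simpa [div_eq_mul_inv, mul_comm, one_div] using this
    · filter_upwards [Filter.eventually_gt_atTop (0:ℝ)] with p hp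
      exact (div_pos Real.pi_pos hp).ne'
  have h1 : Filter.Tendsto (fun p : ℝ => Real.sin (Real.pi/p) / (Real.pi/p)) atTop (nhds 1) :=
    tendsto_sin_div.comp hπp
  have h2 : Filter.Tendsto (fun p : ℝ => p ^ (-(1/p))) atTop (nhds 1) := by
    have := tendsto_rpow_neg_div
    refine this.congr fun p => ?_
    rw [neg_div]
  have h3 : Filter.Tendsto
      (fun p : ℝ => Real.pi * (Real.sin (Real.pi/p) / (Real.pi/p)) * p ^ (-(1/p)))
      atTop (nhds (Real.pi * 1 * 1)) := (h1.const_mul _).mul h2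
  rw [mul_one, mul_one] at h3
  refine h3.congr' ?_
  filter_upwards [Filter.eventually_gt_atTop (0:ℝ)] with p hp
  have hkey : ((1:ℝ)/p) ^ (1 - 1/p) = (1/p) * p ^ (1/p) := by
    rw [show (1:ℝ) - 1/p = 1 + -(1/p) by ring, Real.rpow_add (by positivity), Real.rpow_one]
    congr 1
    rw [one_div, Real.inv_rpow hp.le, ← Real.rpow_neg hp.le, neg_neg]
  have hppow : (0:ℝ) < p ^ (1/p) := Real.rpow_pos_of_pos hp _
  rw [hkey, Real.rpow_neg hp.le]
  rw [show Real.pi * (1/p) = Real.pi/p by ring]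
  field_simp

lemma tendsto_S : Filter.Tendsto
    (fun p : ℝ => sSup ((fun ω : ℝ => Real.sin (Real.pi * ω) / ω ^ (1 - 1/p)) '' Set.Icc 0 1))
    atTop (nhds Real.pi) := by
  apply tendsto_of_tendsto_of_tendsto_of_le_of_le' tendsto_L tendsto_const_nhds
  · filter_upwards [Filter.eventually_ge_atTop (2:ℝ)] with p hp using S_lb hp
  · filter_upwards [Filter.eventually_ge_atTop (2:ℝ)] with p hp
    exact csSup_le (Set.Nonempty.image _ ⟨0, Set.left_mem_Icc.2 zero_le_one⟩) (S_ub hp)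

lemma tendsto_A : Filter.Tendsto
    (fun p : ℝ => (2 / Real.pi ^ (p + 1)) ^ (1/p)) atTop (nhds (Real.pi⁻¹)) := by
  have h0 : Filter.Tendsto
      (fun p : ℝ => (Real.log 2 - (p+1) * Real.log Real.pi) * (1/p)) atTop
      (nhds (-Real.log Real.pi)) := by
    have heq : ∀ p : ℝ, p ≠ 0 → (Real.log 2 - (p+1) * Real.log Real.pi) * (1/p)
        = Real.log 2 * (1/p) - Real.log Real.pi - Real.log Real.pi * (1/p) := by
      intro p hp; field_simp; ring
    have h1 : Filter.Tendsto
        (fun p : ℝ => Real.log 2 * (1/p) - Real.log Real.pi - Real.log Real.pi * (1/p))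
        atTop (nhds (Real.log 2 * 0 - Real.log Real.pi - Real.log Real.pi * 0)) :=
      ((tendsto_one_div.const_mul _).sub tendsto_const_nhds).sub (tendsto_one_div.const_mul _)
    rw [mul_zero, mul_zero, zero_sub, sub_zero] at h1
    refine h1.congr' ?_
    filter_upwards [Filter.eventually_gt_atTop (0:ℝ)] with p hp
    exact (heq p hp.ne').symm
  have h2 := (Real.continuous_exp.tendsto _).comp h0
  rw [show Real.exp (-Real.log Real.pi) = Real.pi⁻¹ by
    rw [Real.exp_neg, Real.exp_log Real.pi_pos]] at h2
  refine h2.congr' ?_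
  filter_upwards [Filter.eventually_gt_atTop (0:ℝ)] with p hp
  have hpos : (0:ℝ) < 2 / Real.pi ^ (p+1) := by positivity
  rw [Function.comp_apply, Real.rpow_def_of_pos hpos,
    Real.log_div two_ne_zero (by positivity), Real.log_rpow Real.pi_pos]

lemma tendsto_B : Filter.Tendsto
    (fun p : ℝ => (∫ x in Set.Ioi (0:ℝ), |Real.sin x / x| ^ p) ^ (1/p)) atTop (nhds 1) := by
  have hInn : ∀ p : ℝ, 0 ≤ ∫ x in Set.Ioi (0:ℝ), |Real.sin x / x| ^ p := fun p =>
    integral_nonneg fun x => fI_nonneg p x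
  refine tendsto_order.2 ⟨?_, ?_⟩
  · intro c hc
    set a : ℝ := min 1 (Real.sqrt (1 - c)) with ha
    have ha0 : 0 < a := lt_min one_pos (Real.sqrt_pos.2 (by linarith))
    have ha1 : a ≤ 1 := min_le_left _ _
    have ha2 : a^2 ≤ 1 - c := by
      calc a^2 ≤ (Real.sqrt (1-c))^2 := by
            apply pow_le_pow_left₀ ha0.le (min_le_right _ _)
        _ = 1 - c := Real.sq_sqrt (by linarith)
    have hac : c < 1 - a^2/4 := by nlinarith [sq_nonneg a]
    have hlim : Filter.Tendsto (fun p : ℝ => a ^ (1/p) * (1 - a^2/4)) atTop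
        (nhds (1 * (1 - a^2/4))) := (tendsto_const_rpow_one_div ha0).mul_const _
    rw [one_mul] at hlim
    filter_upwards [hlim.eventually (eventually_gt_nhds hac),
      Filter.eventually_ge_atTop (2:ℝ)] with p h1 hp
    refine lt_of_lt_of_le h1 ?_
    have hp0 : (0:ℝ) < p := by linarith
    have key := Ip_ge hp ha0 ha1
    have hmono := Real.rpow_le_rpow (mul_nonneg ha0.le (Real.rpow_nonneg (by nlinarith) _)) key (by positivity : (0:ℝ) ≤ 1/p)
    calc a ^ (1/p) * (1 - a^2/4)
        = (a * (1 - a^2/4) ^ p) ^ (1/p) := by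
          rw [Real.mul_rpow ha0.le (Real.rpow_nonneg (by nlinarith) _),
            ← Real.rpow_mul (by nlinarith), mul_one_div_cancel hp0.ne', Real.rpow_one]
      _ ≤ _ := hmono
  · intro c hc
    have hlim : Filter.Tendsto (fun p : ℝ => (2:ℝ) ^ (1/p)) atTop (nhds 1) :=
      tendsto_const_rpow_one_div two_pos
    filter_upwards [hlim.eventually (eventually_lt_nhds hc),
      Filter.eventually_ge_atTop (2:ℝ)] with p h1 hp
    refine lt_of_le_of_lt ?_ h1
    exact Real.rpow_le_rpow (hInn p) (Ip_le_two hp) (by positivity)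

/-- The constant `c_p^* = ((2/π^(p+1)) ∫_0^∞ |sin x / x|^p dx)^(1/p) ·
    max_{0 ≤ ω ≤ 1} sin(πω)/ω^(1-1/p)`. -/
noncomputable def cpstar (p : ℝ) : ℝ :=
  ((2 / Real.pi ^ (p + 1)) * ∫ x in Set.Ioi (0:ℝ), |Real.sin x / x| ^ p) ^ (1/p) *
    sSup ((fun ω : ℝ => Real.sin (Real.pi * ω) / ω ^ (1 - 1/p)) '' Set.Icc 0 1)

theorem stmt_14 : Filter.Tendsto cpstar Filter.atTop (nhds 1) := by
  have heq : ∀ p : ℝ, cpstar p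
      = (2 / Real.pi ^ (p + 1)) ^ (1/p)
        * (∫ x in Set.Ioi (0:ℝ), |Real.sin x / x| ^ p) ^ (1/p)
        * sSup ((fun ω : ℝ => Real.sin (Real.pi * ω) / ω ^ (1 - 1/p)) '' Set.Icc 0 1) := by
    intro p
    unfold cpstar
    rw [Real.mul_rpow (by positivity) (integral_nonneg fun x => fI_nonneg p x)]
  have h := (tendsto_A.mul tendsto_B).mul tendsto_S
  rw [show Real.pi⁻¹ * 1 * Real.pi = 1 by
    rw [mul_one, inv_mul_cancel₀ Real.pi_ne_zero]] at h
  exact h.congr fun p => (heq p).symm
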